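/- For all indices 1 ≤ i, j ≤ ℓ and all integers n, m, the quantum affine raising–raising relation holds mode-wise: E_i^{(n+1)}∘E_j^{(m)} − q_i^{a_{ij}}·E_i^{(n)}∘E_j^{(m+1)} = q_i^{a_{ij}}·E_j^{(m)}∘E_i^{(n+1)} − E_j^{(m+1)}∘E_i^{(n)}, as an identity of ℂ(s)-linear endomorphisms of F (this is the coefficient of z^{−n}w^{−m} in the relation (z − q_i^{a_{ij}}w)E_i(z)E_j(w) = (q_i^{a_{ij}}z − w)E_j(w)E_i(z)). -/

import Mathlib

open MvPolynomial Finset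

set_option synthInstance.maxHeartbeats 1000000
set_option maxHeartbeats 1000000

noncomputable section

/-- The base field `ℂ(s)`. -/
abbrev K0 := RatFunc ℂ

/-- The variables. -/
abbrev Var (ℓ : ℕ) (m l : Fin ℓ → ℕ) := ((i : Fin ℓ) × Fin (m i)) ⊕ ((i : Fin ℓ) × Fin (l i))

/-- The rational function field over `ℂ(s)` in the given variables. -/
abbrev FF (ℓ : ℕ) (m l : Fin ℓ → ℕ) := FractionRing (MvPolynomial (Var ℓ m l) K0)

variable (ℓ : ℕ) (m l : Fin ℓ → ℕ) (d : Fin ℓ → ℕ) (a : Fin ℓ → Fin ℓ → ℤ)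

def cstHom : K0 →+* FF ℓ m l :=
  (algebraMap (MvPolynomial (Var ℓ m l) K0) (FF ℓ m l)).comp
    (C : K0 →+* MvPolynomial (Var ℓ m l) K0)

def cst (c : K0) : FF ℓ m l := cstHom ℓ m l c

/-- The variable `V_{i,k}`. -/
def V (i : Fin ℓ) (k : Fin (m i)) : FF ℓ m l :=
  algebraMap (MvPolynomial (Var ℓ m l) K0) (FF ℓ m l) (X (Sum.inl ⟨i, k⟩))

/-- The variable `W_{i,t}`. -/
def W (i : Fin ℓ) (t : Fin (l i)) : FF ℓ m l :=
  algebraMap (MvPolynomial (Var ℓ m l) K0) (FF ℓ m l) (X (Sum.inr ⟨i, t⟩))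

/-- `s ∈ ℂ(s)`. -/
def sElt : K0 := RatFunc.X

/-- `q = s²`. -/
def qElt : K0 := RatFunc.X ^ 2

/-- `q^e` for an integer exponent `e`. -/
def qz (e : ℤ) : K0 := qElt ^ e

/-- `q_i^e = q^{d_i·e}`. -/
def qiz (i : Fin ℓ) (e : ℤ) : K0 := qElt ^ ((d i : ℤ) * e)

/-- `q_i − q_i⁻¹`. -/
def qdiff (i : Fin ℓ) : K0 := qiz ℓ d i 1 - qiz ℓ d i (-1)

/-- `c_i = s^{Σ_j d_j·m_j·a_{ji}}`. -/
def cElt (i : Fin ℓ) : K0 := sElt ^ (∑ j : Fin ℓ, (d j : ℤ) * (m j : ℤ) * a j i)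

/-- The algebra automorphism of the polynomial ring rescaling the variable `w` by the
nonzero constant `c` and fixing all other variables. -/
def scalePoly (c : K0) (hc : c ≠ 0) (w : Var ℓ m l) :
    MvPolynomial (Var ℓ m l) K0 ≃ₐ[K0] MvPolynomial (Var ℓ m l) K0 :=
  AlgEquiv.ofAlgHom
    (aeval (fun j => if j = w then MvPolynomial.C c * X j else X j))
    (aeval (fun j => if j = w then MvPolynomial.C c⁻¹ * X j else X j))
    (by
      apply MvPolynomial.algHom_ext; intro j
      by_cases h : j = w <;>
        simp [h, ← mul_assoc, ← C_mul, mul_inv_cancel₀ hc, inv_mul_cancel₀ hc])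
    (by
      apply MvPolynomial.algHom_ext; intro j
      by_cases h : j = w <;>
        simp [h, ← mul_assoc, ← C_mul, mul_inv_cancel₀ hc, inv_mul_cancel₀ hc])

/-- The induced automorphism of `F`. -/
def scaleField (c : K0) (hc : c ≠ 0) (w : Var ℓ m l) : FF ℓ m l ≃+* FF ℓ m l :=
  IsFractionRing.ringEquivOfRingEquiv (scalePoly ℓ m l c hc w).toRingEquiv

/-- `u_{i,k}` : the automorphism `V_{i,k} ↦ q^{d_i}·V_{i,k}`. -/
def uik (i : Fin ℓ) (k : Fin (m i)) : FF ℓ m l ≃+* FF ℓ m l :=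
  scaleField ℓ m l (qElt ^ (d i)) (pow_ne_zero _ (pow_ne_zero _ RatFunc.X_ne_zero))
    (Sum.inl ⟨i, k⟩)

/-- The field `ℂ(s)({W_{i,t}})` of rational functions in the `W`-variables only:
the coefficient field for the polynomials `R_i^{(±)}`. -/
abbrev WField := FractionRing (MvPolynomial ((i : Fin ℓ) × Fin (l i)) K0)

/-- `W_{i,t}` as an element of `ℂ(s)({W_{i,t}})`. -/
def Wsmall (i : Fin ℓ) (t : Fin (l i)) : WField ℓ l :=
  algebraMap (MvPolynomial ((i : Fin ℓ) × Fin (l i)) K0) (WField ℓ l) (X ⟨i, t⟩)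

/-- The natural embedding `ℂ(s)({W_{i,t}}) ↪ F`. -/
def wEmb : WField ℓ l →+* FF ℓ m l :=
  IsFractionRing.lift (g :=
    ((algebraMap (MvPolynomial (Var ℓ m l) K0) (FF ℓ m l)).comp
      (rename (Sum.inr : ((i : Fin ℓ) × Fin (l i)) → Var ℓ m l)).toRingHom))
    ((IsFractionRing.injective (MvPolynomial (Var ℓ m l) K0) (FF ℓ m l)).comp
      (rename_injective _ Sum.inr_injective))

/-- Evaluation of a polynomial with coefficients in `ℂ(s)({W_{i,t}})` at a point of `F`. -/
def Rval (P : Polynomial (WField ℓ l)) (x : FF ℓ m l) : FF ℓ m l :=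
  Polynomial.eval₂ (wEmb ℓ m l) x P

/-- The mode operator `E_i^{(n)}`. -/
def Enop (Rp : (i : Fin ℓ) → Polynomial (WField ℓ l)) (i : Fin ℓ) (n : ℤ) :
    FF ℓ m l → FF ℓ m l := fun f =>
  cst ℓ m l (cElt ℓ m d a i / qdiff ℓ d i) * (∏ p : Fin (m i), V ℓ m l i p) *
    (∏ j ∈ univ.filter (fun j => i < j), ∏ p : Fin (m j), (V ℓ m l j p) ^ (a j i)) *
    ∑ k : Fin (m i),
      ((V ℓ m l i k) ^ (2 * n - 2) * Rval ℓ m l (Rp i) ((V ℓ m l i k) ^ 2) *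
        (∏ j ∈ univ.filter (fun j => i < j), ∏ r ∈ range (-(a j i)).toNat, ∏ p : Fin (m j),
          ((V ℓ m l i k) ^ 2
            - cst ℓ m l (qz ((d j : ℤ) * (a j i + 2 * ((r : ℤ) + 1)))) * (V ℓ m l j p) ^ 2)) /
        (∏ p ∈ univ.erase k, ((V ℓ m l i k) ^ 2 - (V ℓ m l i p) ^ 2))) *
      (uik ℓ m l d i k).symm f

section Infra
variable {ℓ : ℕ} {m l : Fin ℓ → ℕ} (d : Fin ℓ → ℕ)

lemma scaleField_algebraMap (c : K0) (hc : c ≠ 0) (w : Var ℓ m l)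
    (p : MvPolynomial (Var ℓ m l) K0) :
    scaleField ℓ m l c hc w (algebraMap _ (FF ℓ m l) p)
      = algebraMap _ _ (scalePoly ℓ m l c hc w p) :=
  IsFractionRing.ringEquivOfRingEquiv_algebraMap _ _

lemma scalePoly_X (c : K0) (hc : c ≠ 0) (w v : Var ℓ m l) :
    scalePoly ℓ m l c hc w (X v) = if v = w then C c * X v else X v := by
  simp [scalePoly]

lemma scalePoly_C (c : K0) (hc : c ≠ 0) (w : Var ℓ m l) (x : K0) :
    scalePoly ℓ m l c hc w (C x) = C x := by
  simp [scalePoly]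

lemma scaleField_cst (c : K0) (hc : c ≠ 0) (w : Var ℓ m l) (x : K0) :
    scaleField ℓ m l c hc w (cst ℓ m l x) = cst ℓ m l x := by
  rw [cst, cstHom, RingHom.comp_apply, scaleField_algebraMap, scalePoly_C]

lemma scaleField_symm_algebraMap (c : K0) (hc : c ≠ 0) (w : Var ℓ m l)
    (p : MvPolynomial (Var ℓ m l) K0) :
    (scaleField ℓ m l c hc w).symm (algebraMap _ (FF ℓ m l) p)
      = algebraMap _ _ ((scalePoly ℓ m l c hc w).symm p) := by
  apply (scaleField ℓ m l c hc w).injective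
  rw [RingEquiv.apply_symm_apply, scaleField_algebraMap, AlgEquiv.apply_symm_apply]

lemma scalePoly_symm_X (c : K0) (hc : c ≠ 0) (w v : Var ℓ m l) :
    (scalePoly ℓ m l c hc w).symm (X v) = if v = w then C c⁻¹ * X v else X v := by
  simp [scalePoly, AlgEquiv.ofAlgHom_symm_apply]

end Infra
section Infra2
variable {ℓ : ℕ} {m l : Fin ℓ → ℕ} (d : Fin ℓ → ℕ)

/-- abbreviation for the inverse automorphism -/
def sig (i : Fin ℓ) (k : Fin (m i)) : FF ℓ m l ≃+* FF ℓ m l := (uik ℓ m l d i k).symm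

lemma qElt_ne : (qElt : K0) ≠ 0 := pow_ne_zero _ RatFunc.X_ne_zero

lemma qz_ne (e : ℤ) : qz e ≠ 0 := zpow_ne_zero _ qElt_ne

lemma qiz_ne (i : Fin ℓ) (e : ℤ) : qiz ℓ d i e ≠ 0 := zpow_ne_zero _ qElt_ne

lemma cst_ne_zero (x : K0) (hx : x ≠ 0) : cst ℓ m l x ≠ 0 := by
  intro h
  exact hx ((cstHom ℓ m l).injective (by simpa [cst] using h))

lemma cst_mul (x y : K0) : cst ℓ m l (x * y) = cst ℓ m l x * cst ℓ m l y := map_mul _ _ _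

lemma cst_inv (x : K0) : cst ℓ m l x⁻¹ = (cst ℓ m l x)⁻¹ := map_inv₀ (cstHom ℓ m l) x

lemma qiz_add (i : Fin ℓ) (e e' : ℤ) :
    qiz ℓ d i (e + e') = qiz ℓ d i e * qiz ℓ d i e' := by
  rw [qiz, qiz, qiz, mul_add, zpow_add₀ qElt_ne]

lemma qiz_neg (i : Fin ℓ) (e : ℤ) : qiz ℓ d i (-e) = (qiz ℓ d i e)⁻¹ := by
  rw [qiz, qiz, mul_neg, zpow_neg]

lemma scalePoly_symm_C (c : K0) (hc : c ≠ 0) (w : Var ℓ m l) (x : K0) :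
    (scalePoly ℓ m l c hc w).symm (C x) = C x :=
  (AlgEquiv.symm_apply_eq _).2 (scalePoly_C c hc w x).symm

lemma sig_cst (i : Fin ℓ) (k : Fin (m i)) (x : K0) :
    sig d i k (cst ℓ m l x) = cst ℓ m l x := by
  rw [sig, uik, cst, cstHom, RingHom.comp_apply, scaleField_symm_algebraMap,
    scalePoly_symm_C]

lemma sig_V_self (i : Fin ℓ) (k : Fin (m i)) :
    sig d i k (V ℓ m l i k) = cst ℓ m l (qiz ℓ d i (-1)) * V ℓ m l i k := by
  rw [sig, uik, V, scaleField_symm_algebraMap, scalePoly_symm_X, if_pos rfl, map_mul,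
    show qiz ℓ d i (-1) = (qElt ^ (d i : ℕ))⁻¹ by
      rw [qiz, mul_neg_one, zpow_neg, zpow_natCast]]
  rfl

lemma sig_V_ne (i : Fin ℓ) (k : Fin (m i)) (j : Fin ℓ) (p : Fin (m j))
    (h : (Sum.inl ⟨j, p⟩ : Var ℓ m l) ≠ Sum.inl ⟨i, k⟩) :
    sig d i k (V ℓ m l j p) = V ℓ m l j p := by
  rw [sig, uik, V, scaleField_symm_algebraMap, scalePoly_symm_X, if_neg h]

lemma sig_V_ne_idx (i : Fin ℓ) (k : Fin (m i)) (j : Fin ℓ) (p : Fin (m j))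
    (h : j ≠ i) : sig d i k (V ℓ m l j p) = V ℓ m l j p :=
  sig_V_ne d i k j p (by simp [h])

lemma sig_V_ne_k (i : Fin ℓ) (k p : Fin (m i)) (h : p ≠ k) :
    sig d i k (V ℓ m l i p) = V ℓ m l i p :=
  sig_V_ne d i k i p (by simp [h])

end Infra2
section Infra3
variable {ℓ : ℕ} {m l : Fin ℓ → ℕ} (d : Fin ℓ → ℕ)

lemma algMap_injective :
    Function.Injective (algebraMap (MvPolynomial (Var ℓ m l) K0) (FF ℓ m l)) :=
  IsFractionRing.injective _ _

lemma V_ne_zero (i : Fin ℓ) (k : Fin (m i)) : V ℓ m l i k ≠ 0 := by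
  rw [V]
  intro h
  have h0 : (X (Sum.inl ⟨i, k⟩) : MvPolynomial (Var ℓ m l) K0) = 0 :=
    algMap_injective (by simpa using h)
  exact MvPolynomial.X_ne_zero _ h0

/-- `V₁² - c·V₂² ≠ 0` for distinct variables and `c ≠ 0`. -/
lemma vsq_sub_ne (v1 v2 : Var ℓ m l) (hv : v1 ≠ v2) (c : K0) (hc : c ≠ 0) :
    (algebraMap (MvPolynomial (Var ℓ m l) K0) (FF ℓ m l) (X v1)) ^ 2
      - cst ℓ m l c * (algebraMap (MvPolynomial (Var ℓ m l) K0) (FF ℓ m l) (X v2)) ^ 2 ≠ 0 := by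
  have : (algebraMap (MvPolynomial (Var ℓ m l) K0) (FF ℓ m l) (X v1)) ^ 2
      - cst ℓ m l c * (algebraMap (MvPolynomial (Var ℓ m l) K0) (FF ℓ m l) (X v2)) ^ 2
      = algebraMap (MvPolynomial (Var ℓ m l) K0) (FF ℓ m l)
          (X v1 ^ 2 - C c * X v2 ^ 2) := by
    simp [cst, cstHom, map_mul, map_pow, map_sub]
  rw [this]
  intro h
  have h0 : (X v1 ^ 2 - C c * X v2 ^ 2 : MvPolynomial (Var ℓ m l) K0) = 0 :=
    algMap_injective (by simpa using h)
  have := congrArg (MvPolynomial.coeff (Finsupp.single v1 2)) h0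
  rw [MvPolynomial.coeff_sub, MvPolynomial.coeff_X_pow, MvPolynomial.coeff_C_mul,
    MvPolynomial.coeff_X_pow, if_pos rfl, if_neg (by
      intro hh
      exact hv (Finsupp.single_left_injective (by norm_num) hh.symm))] at this
  simp at this

lemma VV_sub_ne (i : Fin ℓ) (k : Fin (m i)) (j : Fin ℓ) (p : Fin (m j))
    (hv : (Sum.inl ⟨i, k⟩ : Var ℓ m l) ≠ Sum.inl ⟨j, p⟩) (c : K0) (hc : c ≠ 0) :
    V ℓ m l i k ^ 2 - cst ℓ m l c * V ℓ m l j p ^ 2 ≠ 0 :=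
  vsq_sub_ne _ _ hv c hc

lemma VV_sub_ne' (i : Fin ℓ) (k : Fin (m i)) (j : Fin ℓ) (p : Fin (m j))
    (hv : (Sum.inl ⟨i, k⟩ : Var ℓ m l) ≠ Sum.inl ⟨j, p⟩) :
    V ℓ m l i k ^ 2 - V ℓ m l j p ^ 2 ≠ 0 := by
  have := vsq_sub_ne (m := m) (l := l) _ _ hv 1 one_ne_zero
  simpa [cst, V] using this

end Infra3
section Infra4
variable {ℓ : ℕ} {m l : Fin ℓ → ℕ} (d : Fin ℓ → ℕ)

lemma wEmb_algebraMap (p : MvPolynomial ((i : Fin ℓ) × Fin (l i)) K0) :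
    wEmb ℓ m l (algebraMap _ (WField ℓ l) p)
      = algebraMap (MvPolynomial (Var ℓ m l) K0) (FF ℓ m l) (rename Sum.inr p) := by
  rw [wEmb, IsFractionRing.lift_algebraMap]
  rfl

lemma scalePoly_symm_rename (c : K0) (hc : c ≠ 0) (i : Fin ℓ) (k : Fin (m i))
    (p : MvPolynomial ((i : Fin ℓ) × Fin (l i)) K0) :
    (scalePoly ℓ m l c hc (Sum.inl ⟨i, k⟩)).symm (rename Sum.inr p) = rename Sum.inr p := by
  have : ((scalePoly ℓ m l c hc (Sum.inl ⟨i, k⟩)).symm.toAlgHom.comp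
      (rename (R := K0) (Sum.inr : ((i : Fin ℓ) × Fin (l i)) → Var ℓ m l)))
      = rename Sum.inr := by
    apply MvPolynomial.algHom_ext
    intro v
    simp [scalePoly_symm_X]
  exact congrFun (congrArg (fun (f : _ →ₐ[K0] _) => (f : _ → _)) this) p

lemma sig_wEmb (i : Fin ℓ) (k : Fin (m i)) (x : WField ℓ l) :
    sig d i k (wEmb ℓ m l x) = wEmb ℓ m l x := by
  have : ((sig (m := m) (l := l) d i k).toRingHom.comp (wEmb ℓ m l)) = wEmb ℓ m l := by
    apply IsLocalization.ringHom_ext (nonZeroDivisors (MvPolynomial ((i : Fin ℓ) × Fin (l i)) K0))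
    refine RingHom.ext fun p => ?_
    simp only [RingHom.comp_apply, wEmb_algebraMap]
    rw [show ((sig (m := m) (l := l) d i k).toRingHom : FF ℓ m l → FF ℓ m l)
        = ((uik ℓ m l d i k).symm : FF ℓ m l → FF ℓ m l) from rfl]
    rw [uik, scaleField_symm_algebraMap, scalePoly_symm_rename]
  exact congrFun (congrArg (fun (f : _ →+* _) => (f : _ → _)) this) x

lemma sig_Rval (i : Fin ℓ) (k : Fin (m i)) (P : Polynomial (WField ℓ l)) (x : FF ℓ m l) :
    sig d i k (Rval ℓ m l P x) = Rval ℓ m l P (sig d i k x) := by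
  rw [Rval, Rval]
  rw [show (sig d i k) (Polynomial.eval₂ (wEmb ℓ m l) x P)
      = (sig (m := m) (l := l) d i k).toRingHom (Polynomial.eval₂ (wEmb ℓ m l) x P) from rfl]
  rw [Polynomial.hom_eval₂]
  congr 1
  apply IsLocalization.ringHom_ext (nonZeroDivisors (MvPolynomial ((i : Fin ℓ) × Fin (l i)) K0))
  refine RingHom.ext fun p => ?_
  simp only [RingHom.comp_apply]
  exact sig_wEmb d i k _

/-- the scaling automorphisms commute -/
lemma sig_comm (i : Fin ℓ) (k : Fin (m i)) (j : Fin ℓ) (t : Fin (m j)) (f : FF ℓ m l) :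
    sig d i k (sig d j t f) = sig d j t (sig d i k f) := by
  have key : ∀ (c1 c2 : K0) (h1 : c1 ≠ 0) (h2 : c2 ≠ 0) (w1 w2 : Var ℓ m l) (g : FF ℓ m l),
      scaleField ℓ m l c1 h1 w1 (scaleField ℓ m l c2 h2 w2 g)
        = scaleField ℓ m l c2 h2 w2 (scaleField ℓ m l c1 h1 w1 g) := by
    intro c1 c2 h1 h2 w1 w2 g
    have hcomm : ((scalePoly ℓ m l c1 h1 w1).toAlgHom.comp (scalePoly ℓ m l c2 h2 w2).toAlgHom)
        = ((scalePoly ℓ m l c2 h2 w2).toAlgHom.comp (scalePoly ℓ m l c1 h1 w1).toAlgHom) := by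
      apply MvPolynomial.algHom_ext
      intro v
      simp only [AlgHom.coe_comp, Function.comp_apply, AlgEquiv.toAlgHom_eq_coe,
        AlgEquiv.coe_algHom, scalePoly_X]
      by_cases e1 : v = w1
      · subst e1
        by_cases e2 : v = w2
        · subst e2
          simp [scalePoly_X, map_mul, scalePoly_C, mul_left_comm]
        · simp [scalePoly_X, map_mul, scalePoly_C, e2, mul_left_comm]
      · by_cases e2 : v = w2
        · subst e2
          simp [scalePoly_X, map_mul, scalePoly_C, e1, mul_left_comm]
        · simp [scalePoly_X, map_mul, scalePoly_C, e1, e2]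
    have : ((scaleField ℓ m l c1 h1 w1).toRingHom.comp (scaleField ℓ m l c2 h2 w2).toRingHom)
        = ((scaleField ℓ m l c2 h2 w2).toRingHom.comp (scaleField ℓ m l c1 h1 w1).toRingHom) := by
      apply IsLocalization.ringHom_ext (nonZeroDivisors (MvPolynomial (Var ℓ m l) K0))
      refine RingHom.ext fun p => ?_
      simp only [RingHom.comp_apply, RingEquiv.toRingHom_eq_coe, RingEquiv.coe_toRingHom]
      rw [scaleField_algebraMap, scaleField_algebraMap, scaleField_algebraMap,
        scaleField_algebraMap]
      exact congrArg _ (congrFun (congrArg (fun (f : _ →ₐ[K0] _) => (f : _ → _)) hcomm) p)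
    exact congrFun (congrArg (fun (f : _ →+* _) => (f : _ → _)) this) g
  rw [sig, sig, uik, uik]
  apply (scaleField ℓ m l (qElt ^ d i) (pow_ne_zero _ (pow_ne_zero _ RatFunc.X_ne_zero)) (Sum.inl ⟨i, k⟩)).injective
  rw [RingEquiv.apply_symm_apply]
  apply (scaleField ℓ m l (qElt ^ d j) (pow_ne_zero _ (pow_ne_zero _ RatFunc.X_ne_zero)) (Sum.inl ⟨j, t⟩)).injective
  rw [key]
  rw [RingEquiv.apply_symm_apply, RingEquiv.apply_symm_apply, RingEquiv.apply_symm_apply]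

end Infra4
section Infra5
variable (ℓ : ℕ) (m l : Fin ℓ → ℕ) (d : Fin ℓ → ℕ) (a : Fin ℓ → Fin ℓ → ℤ)

def P1 (b : Fin ℓ) : FF ℓ m l := ∏ p : Fin (m b), V ℓ m l b p

def P2 (b : Fin ℓ) : FF ℓ m l :=
  ∏ j ∈ univ.filter (fun j => b < j), ∏ p : Fin (m j), (V ℓ m l j p) ^ (a j b)

def Xpr (b : Fin ℓ) (c : Fin (m b)) : FF ℓ m l :=
  ∏ j ∈ univ.filter (fun j => b < j), ∏ r ∈ range (-(a j b)).toNat, ∏ p : Fin (m j),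
    ((V ℓ m l b c) ^ 2
      - cst ℓ m l (qz ((d j : ℤ) * (a j b + 2 * ((r : ℤ) + 1)))) * (V ℓ m l j p) ^ 2)

def Dpr (b : Fin ℓ) (c : Fin (m b)) : FF ℓ m l :=
  ∏ p ∈ univ.erase c, ((V ℓ m l b c) ^ 2 - (V ℓ m l b p) ^ 2)

def Psi (Rp : (i : Fin ℓ) → Polynomial (WField ℓ l)) (b : Fin ℓ) (c : Fin (m b)) : FF ℓ m l :=
  cst ℓ m l (cElt ℓ m d a b / qdiff ℓ d b) * P1 ℓ m l b * P2 ℓ m l a b *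
    (Rval ℓ m l (Rp b) ((V ℓ m l b c) ^ 2) * Xpr ℓ m l d a b c / Dpr ℓ m l b c)

def Phi (Rp : (i : Fin ℓ) → Polynomial (WField ℓ l)) (b : Fin ℓ) (c : Fin (m b)) (n : ℤ) :
    FF ℓ m l :=
  (V ℓ m l b c) ^ (2 * n - 2) * Psi ℓ m l d a Rp b c

variable {ℓ m l d a}

lemma Enop_apply (Rp : (i : Fin ℓ) → Polynomial (WField ℓ l)) (i : Fin ℓ) (n : ℤ)
    (f : FF ℓ m l) :
    Enop ℓ m l d a Rp i n f = ∑ k : Fin (m i), Phi ℓ m l d a Rp i k n * sig d i k f := by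
  rw [Enop, Finset.mul_sum]
  refine Finset.sum_congr rfl fun k _ => ?_
  rw [Phi, Psi, P1, P2, Xpr, Dpr, sig]
  ring

lemma Dpr_ne_zero (b : Fin ℓ) (c : Fin (m b)) : Dpr ℓ m l b c ≠ 0 := by
  rw [Dpr]
  refine Finset.prod_ne_zero_iff.2 fun p hp => ?_
  exact VV_sub_ne' b c b p (by simp [(Finset.mem_erase.1 hp).1.symm])

lemma sig_ne_zero (i : Fin ℓ) (k : Fin (m i)) {x : FF ℓ m l} (hx : x ≠ 0) :
    sig d i k x ≠ 0 := by
  intro h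
  exact hx ((sig d i k).injective (by simpa using h))

lemma Phi_succ (Rp : (i : Fin ℓ) → Polynomial (WField ℓ l)) (b : Fin ℓ) (c : Fin (m b))
    (n : ℤ) :
    Phi ℓ m l d a Rp b c (n + 1) = (V ℓ m l b c) ^ 2 * Phi ℓ m l d a Rp b c n := by
  rw [Phi, Phi, show (2 * (n + 1) - 2 : ℤ) = (2 * n - 2) + (2 : ℕ) by push_cast; ring,
    zpow_add₀ (V_ne_zero b c), zpow_natCast]
  ring

/-- cst of qiz powers -/
lemma cst_qiz_sq (i : Fin ℓ) :
    cst ℓ m l (qiz ℓ d i (-2)) = (cst ℓ m l (qiz ℓ d i (-1)))^2 := by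
  rw [show (-2 : ℤ) = -1 + -1 by norm_num, qiz_add, cst_mul, sq]

lemma cst_qiz_two (i : Fin ℓ) :
    cst ℓ m l (qiz ℓ d i 2) = ((cst ℓ m l (qiz ℓ d i (-1)))^2)⁻¹ := by
  rw [← cst_qiz_sq]
  rw [show (2:ℤ) = -(-2) by norm_num, qiz_neg, cst_inv]
  norm_num

lemma cst_qz_neg (e : ℤ) :
    cst ℓ m l (qz (-e)) = (cst ℓ m l (qz e))⁻¹ := by
  rw [qz, qz, zpow_neg, cst_inv]

lemma cst_qz_ne (e : ℤ) : cst ℓ m l (qz e) ≠ 0 := cst_ne_zero _ (qz_ne e)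

lemma cst_qiz_ne (i : Fin ℓ) (e : ℤ) : cst ℓ m l (qiz ℓ d i e) ≠ 0 :=
  cst_ne_zero _ (qiz_ne d i e)

end Infra5
section Infra6
variable {ℓ : ℕ} {m l : Fin ℓ → ℕ} {d : Fin ℓ → ℕ} {a : Fin ℓ → Fin ℓ → ℤ}

lemma cst_zpow (x : K0) (e : ℤ) : cst ℓ m l (x ^ e) = (cst ℓ m l x) ^ e :=
  map_zpow₀ (cstHom ℓ m l) x e

lemma sig_P1_fix (i : Fin ℓ) (k : Fin (m i)) (b : Fin ℓ) (h : b ≠ i) :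
    sig d i k (P1 ℓ m l b) = P1 ℓ m l b := by
  rw [P1, map_prod]
  exact Finset.prod_congr rfl fun p _ => sig_V_ne_idx d i k b p h

lemma sig_P1_self (i : Fin ℓ) (k : Fin (m i)) :
    sig d i k (P1 ℓ m l i) = cst ℓ m l (qiz ℓ d i (-1)) * P1 ℓ m l i := by
  rw [P1, ← Finset.mul_prod_erase univ _ (mem_univ k), map_mul, sig_V_self, map_prod,
    Finset.prod_congr rfl (fun p hp => sig_V_ne_k d i k p (Finset.mem_erase.1 hp).1),
    mul_assoc]

lemma sig_P2_fix (i : Fin ℓ) (k : Fin (m i)) (b : Fin ℓ) (h : i ≤ b) :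
    sig d i k (P2 ℓ m l a b) = P2 ℓ m l a b := by
  rw [P2, map_prod]
  refine Finset.prod_congr rfl fun j' hj' => ?_
  rw [map_prod]
  refine Finset.prod_congr rfl fun p _ => ?_
  rw [map_zpow₀, sig_V_ne_idx d i k j' p
    (fun e => absurd (Finset.mem_filter.1 hj').2 (by rw [e]; exact not_lt.2 h))]

lemma sig_P2_cross (i j : Fin ℓ) (t : Fin (m j)) (hij : i < j) :
    sig d j t (P2 ℓ m l a i) = cst ℓ m l (qz (-((d j : ℤ) * a j i))) * P2 ℓ m l a i := by
  have hjmem : j ∈ univ.filter (fun j' => i < j') := by simp [hij]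
  have h1 : sig d j t (V ℓ m l j t ^ a j i)
      = cst ℓ m l (qz (-((d j : ℤ) * a j i))) * V ℓ m l j t ^ a j i := by
    rw [map_zpow₀, sig_V_self, mul_zpow, ← cst_zpow]
    congr 2
    rw [qiz, ← zpow_mul, qz]
    congr 1
    ring
  have h2 : sig d j t (∏ p ∈ univ.erase t, V ℓ m l j p ^ a j i)
      = ∏ p ∈ univ.erase t, V ℓ m l j p ^ a j i := by
    rw [map_prod]
    exact Finset.prod_congr rfl fun p hp => by
      rw [map_zpow₀, sig_V_ne_k d j t p (Finset.mem_erase.1 hp).1]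
  have h3 : sig d j t (∏ j' ∈ (univ.filter (fun j' => i < j')).erase j,
        ∏ p : Fin (m j'), V ℓ m l j' p ^ a j' i)
      = ∏ j' ∈ (univ.filter (fun j' => i < j')).erase j,
        ∏ p : Fin (m j'), V ℓ m l j' p ^ a j' i := by
    rw [map_prod]
    refine Finset.prod_congr rfl fun j' hj' => ?_
    rw [map_prod]
    exact Finset.prod_congr rfl fun p _ => by
      rw [map_zpow₀, sig_V_ne_idx d j t j' p (Finset.mem_erase.1 hj').1]
  rw [P2, ← Finset.mul_prod_erase _ _ hjmem,
    ← Finset.mul_prod_erase univ (fun p => V ℓ m l j p ^ a j i) (mem_univ t),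
    map_mul, map_mul, h1, h2, h3]
  ring

lemma sig_Dpr_fix (i : Fin ℓ) (k : Fin (m i)) (b : Fin ℓ) (c : Fin (m b)) (h : b ≠ i) :
    sig d i k (Dpr ℓ m l b c) = Dpr ℓ m l b c := by
  rw [Dpr, map_prod]
  refine Finset.prod_congr rfl fun p _ => ?_
  rw [map_sub, map_pow, map_pow, sig_V_ne_idx d i k b c h, sig_V_ne_idx d i k b p h]

lemma sig_Dpr_diag (i : Fin ℓ) (k t : Fin (m i)) (htk : t ≠ k) :
    sig d i k (Dpr ℓ m l i t) * ((V ℓ m l i t) ^ 2 - (V ℓ m l i k) ^ 2)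
      = Dpr ℓ m l i t
        * ((V ℓ m l i t) ^ 2 - (cst ℓ m l (qiz ℓ d i (-1))) ^ 2 * (V ℓ m l i k) ^ 2) := by
  have hk : k ∈ univ.erase t := Finset.mem_erase.2 ⟨fun e => htk e.symm, mem_univ k⟩
  have h1 : sig d i k ((V ℓ m l i t) ^ 2 - (V ℓ m l i k) ^ 2)
      = (V ℓ m l i t) ^ 2 - (cst ℓ m l (qiz ℓ d i (-1))) ^ 2 * (V ℓ m l i k) ^ 2 := by
    rw [map_sub, map_pow, map_pow, sig_V_ne_k d i k t htk, sig_V_self, mul_pow]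
  have h2 : sig d i k (∏ p ∈ (univ.erase t).erase k,
        ((V ℓ m l i t) ^ 2 - (V ℓ m l i p) ^ 2))
      = ∏ p ∈ (univ.erase t).erase k, ((V ℓ m l i t) ^ 2 - (V ℓ m l i p) ^ 2) := by
    rw [map_prod]
    refine Finset.prod_congr rfl fun p hp => ?_
    rw [map_sub, map_pow, map_pow, sig_V_ne_k d i k t htk,
      sig_V_ne_k d i k p (Finset.mem_erase.1 hp).1]
  rw [Dpr, ← Finset.mul_prod_erase _ _ hk, map_mul, h1, h2]
  ring

lemma sig_Xpr_fix (i : Fin ℓ) (k : Fin (m i)) (b : Fin ℓ) (c : Fin (m b)) (hb : i ≤ b)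
    (hv : (Sum.inl ⟨b, c⟩ : Var ℓ m l) ≠ Sum.inl ⟨i, k⟩) :
    sig d i k (Xpr ℓ m l d a b c) = Xpr ℓ m l d a b c := by
  rw [Xpr, map_prod]
  refine Finset.prod_congr rfl fun j' hj' => ?_
  have hj'i : j' ≠ i := fun e =>
    absurd (Finset.mem_filter.1 hj').2 (by rw [e]; exact not_lt.2 hb)
  rw [map_prod]
  refine Finset.prod_congr rfl fun r _ => ?_
  rw [map_prod]
  refine Finset.prod_congr rfl fun p _ => ?_
  rw [map_sub, map_pow, map_mul, map_pow, sig_cst, sig_V_ne d i k b c hv,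
    sig_V_ne_idx d i k j' p hj'i]

end Infra6
section Infra7
variable {ℓ : ℕ} {m l : Fin ℓ → ℕ} {d : Fin ℓ → ℕ} {a : Fin ℓ → Fin ℓ → ℤ}

lemma telescope {G : Type*} [CommMonoid G] (f : ℕ → G) (N : ℕ) :
    (∏ r ∈ range N, f r) * f N = (∏ r ∈ range N, f (r + 1)) * f 0 := by
  rw [← Finset.prod_range_succ f N, Finset.prod_range_succ' f N]

lemma sig_Xpr_cross (i j : Fin ℓ) (k : Fin (m i)) (t : Fin (m j)) (hij : i < j)
    (hai : a j i ≤ 0) :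
    sig d j t (Xpr ℓ m l d a i k)
        * ((V ℓ m l i k) ^ 2 - cst ℓ m l (qz (-((d j : ℤ) * a j i))) * (V ℓ m l j t) ^ 2)
      = Xpr ℓ m l d a i k
        * ((V ℓ m l i k) ^ 2 - cst ℓ m l (qz ((d j : ℤ) * a j i)) * (V ℓ m l j t) ^ 2) := by
  have hjmem : j ∈ univ.filter (fun j' => i < j') := by simp [hij]
  set x := (V ℓ m l i k) ^ 2 with hx
  set y := (V ℓ m l j t) ^ 2 with hy
  set N := (-(a j i)).toNat with hN
  have hNc : ((N : ℕ) : ℤ) = -(a j i) := Int.toNat_of_nonneg (neg_nonneg.2 hai)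
  have hsx : sig d j t x = x := by
    rw [hx, map_pow, sig_V_ne_idx d j t i k hij.ne]
  have key_t : ∀ r : ℕ,
      sig d j t (x - cst ℓ m l (qz ((d j : ℤ) * (a j i + 2 * ((r : ℤ) + 1)))) * y)
        = x - cst ℓ m l (qz ((d j : ℤ) * (a j i + 2 * (r : ℤ)))) * y := by
    intro r
    rw [map_sub, hsx, map_mul, sig_cst, hy, map_pow, sig_V_self, mul_pow]
    have hc : cst ℓ m l (qz ((d j : ℤ) * (a j i + 2 * ((r : ℤ) + 1))))
        * (cst ℓ m l (qiz ℓ d j (-1))) ^ 2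
        = cst ℓ m l (qz ((d j : ℤ) * (a j i + 2 * (r : ℤ)))) := by
      rw [← cst_qiz_sq, ← cst_mul]
      congr 1
      rw [qz, qiz, qz, ← zpow_add₀ qElt_ne]
      congr 1
      ring
    rw [← mul_assoc, hc]
  have hsplit : (∏ r ∈ range N, ∏ p : Fin (m j),
        (x - cst ℓ m l (qz ((d j : ℤ) * (a j i + 2 * ((r : ℤ) + 1)))) * (V ℓ m l j p) ^ 2))
      = (∏ r ∈ range N,
          (x - cst ℓ m l (qz ((d j : ℤ) * (a j i + 2 * ((r : ℤ) + 1)))) * y))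
        * ∏ r ∈ range N, ∏ p ∈ univ.erase t,
            (x - cst ℓ m l (qz ((d j : ℤ) * (a j i + 2 * ((r : ℤ) + 1))))
              * (V ℓ m l j p) ^ 2) := by
    rw [← Finset.prod_mul_distrib]
    exact Finset.prod_congr rfl fun r _ =>
      (Finset.mul_prod_erase univ _ (mem_univ t)).symm
  have hrest : sig d j t (∏ r ∈ range N, ∏ p ∈ univ.erase t,
        (x - cst ℓ m l (qz ((d j : ℤ) * (a j i + 2 * ((r : ℤ) + 1))))
          * (V ℓ m l j p) ^ 2))
      = ∏ r ∈ range N, ∏ p ∈ univ.erase t,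
        (x - cst ℓ m l (qz ((d j : ℤ) * (a j i + 2 * ((r : ℤ) + 1))))
          * (V ℓ m l j p) ^ 2) := by
    rw [map_prod]
    refine Finset.prod_congr rfl fun r _ => ?_
    rw [map_prod]
    refine Finset.prod_congr rfl fun p hp => ?_
    rw [map_sub, hsx, map_mul, sig_cst, map_pow,
      sig_V_ne_k d j t p (Finset.mem_erase.1 hp).1]
  have houter : sig d j t (∏ j' ∈ (univ.filter (fun j' => i < j')).erase j,
        ∏ r ∈ range (-(a j' i)).toNat, ∏ p : Fin (m j'),
          (x - cst ℓ m l (qz ((d j' : ℤ) * (a j' i + 2 * ((r : ℤ) + 1))))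
            * (V ℓ m l j' p) ^ 2))
      = ∏ j' ∈ (univ.filter (fun j' => i < j')).erase j,
        ∏ r ∈ range (-(a j' i)).toNat, ∏ p : Fin (m j'),
          (x - cst ℓ m l (qz ((d j' : ℤ) * (a j' i + 2 * ((r : ℤ) + 1))))
            * (V ℓ m l j' p) ^ 2) := by
    rw [map_prod]
    refine Finset.prod_congr rfl fun j' hj' => ?_
    rw [map_prod]
    refine Finset.prod_congr rfl fun r _ => ?_
    rw [map_prod]
    refine Finset.prod_congr rfl fun p _ => ?_
    rw [map_sub, hsx, map_mul, sig_cst, map_pow,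
      sig_V_ne_idx d j t j' p (Finset.mem_erase.1 hj').1]
  -- telescoping
  have htel := telescope
    (fun r : ℕ => x - cst ℓ m l (qz ((d j : ℤ) * (a j i + 2 * (r : ℤ)))) * y) N
  beta_reduce at htel
  rw [show ((d j : ℤ) * (a j i + 2 * ((N : ℕ) : ℤ))) = -((d j : ℤ) * a j i) by
      rw [hNc]; ring] at htel
  rw [show ((d j : ℤ) * (a j i + 2 * (((0 : ℕ)) : ℤ))) = (d j : ℤ) * a j i by
      push_cast; ring] at htel
  have hcast : (∏ r ∈ range N,
        (x - cst ℓ m l (qz ((d j : ℤ) * (a j i + 2 * (((r + 1 : ℕ)) : ℤ)))) * y))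
      = ∏ r ∈ range N,
        (x - cst ℓ m l (qz ((d j : ℤ) * (a j i + 2 * ((r : ℤ) + 1)))) * y) := by
    refine Finset.prod_congr rfl fun r _ => ?_
    rw [show ((d j : ℤ) * (a j i + 2 * (((r + 1 : ℕ)) : ℤ)))
        = (d j : ℤ) * (a j i + 2 * ((r : ℤ) + 1)) by push_cast; ring]
  rw [hcast] at htel
  -- assemble
  rw [Xpr, ← Finset.mul_prod_erase _ _ hjmem, hsplit, map_mul, map_mul, hrest, houter,
    map_prod, Finset.prod_congr rfl (fun r (_ : r ∈ range N) => key_t r)]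
  linear_combination ((∏ r ∈ range N, ∏ p ∈ univ.erase t,
      (x - cst ℓ m l (qz ((d j : ℤ) * (a j i + 2 * ((r : ℤ) + 1))))
        * (V ℓ m l j p) ^ 2))
    * (∏ j' ∈ (univ.filter (fun j' => i < j')).erase j,
        ∏ r ∈ range (-(a j' i)).toNat, ∏ p : Fin (m j'),
          (x - cst ℓ m l (qz ((d j' : ℤ) * (a j' i + 2 * ((r : ℤ) + 1))))
            * (V ℓ m l j' p) ^ 2))) * htel

end Infra7
section Infra8
variable {ℓ : ℕ} {m l : Fin ℓ → ℕ} {d : Fin ℓ → ℕ} {a : Fin ℓ → Fin ℓ → ℤ}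
  {Rp : (i : Fin ℓ) → Polynomial (WField ℓ l)}

lemma sig_Rarg (i : Fin ℓ) (k : Fin (m i)) (b : Fin ℓ) (c : Fin (m b))
    (hv : (Sum.inl ⟨b, c⟩ : Var ℓ m l) ≠ Sum.inl ⟨i, k⟩) :
    sig d i k (Rval ℓ m l (Rp b) ((V ℓ m l b c) ^ 2))
      = Rval ℓ m l (Rp b) ((V ℓ m l b c) ^ 2) := by
  rw [sig_Rval, map_pow, sig_V_ne d i k b c hv]

lemma sig_Phi_fix (i j : Fin ℓ) (k : Fin (m i)) (t : Fin (m j)) (n : ℤ) (hij : i < j) :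
    sig d i k (Phi ℓ m l d a Rp j t n) = Phi ℓ m l d a Rp j t n := by
  have hne : (Sum.inl ⟨j, t⟩ : Var ℓ m l) ≠ Sum.inl ⟨i, k⟩ := by simp [hij.ne']
  simp only [Phi, Psi, map_mul, map_div₀, map_zpow₀]
  rw [sig_V_ne d i k j t hne, sig_cst, sig_P1_fix i k j hij.ne', sig_P2_fix i k j hij.le,
    sig_Rarg i k j t hne, sig_Xpr_fix i k j t hij.le hne, sig_Dpr_fix i k j t hij.ne']

lemma sig_Phi_self (i : Fin ℓ) (k : Fin (m i)) (n : ℤ) :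
    sig d i k (Phi ℓ m l d a Rp i k n)
      = (cst ℓ m l (qiz ℓ d i (-1))) ^ (2 * n - 2)
        * ((V ℓ m l i k) ^ (2 * n - 2) * sig d i k (Psi ℓ m l d a Rp i k)) := by
  rw [Phi, map_mul, map_zpow₀, sig_V_self, mul_zpow]
  ring

lemma sig_Phi_diag (i : Fin ℓ) (k t : Fin (m i)) (n : ℤ) (htk : t ≠ k) :
    sig d i k (Phi ℓ m l d a Rp i t n)
        * ((V ℓ m l i t) ^ 2 - (cst ℓ m l (qiz ℓ d i (-1))) ^ 2 * (V ℓ m l i k) ^ 2)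
      = cst ℓ m l (qiz ℓ d i (-1)) * Phi ℓ m l d a Rp i t n
        * ((V ℓ m l i t) ^ 2 - (V ℓ m l i k) ^ 2) := by
  have hne : (Sum.inl ⟨i, t⟩ : Var ℓ m l) ≠ Sum.inl ⟨i, k⟩ := by simp [htk]
  have hD := sig_Dpr_diag (m := m) (l := l) (d := d) i k t htk
  have hD0 : Dpr ℓ m l i t ≠ 0 := Dpr_ne_zero i t
  have hyx0 : (V ℓ m l i t) ^ 2 - (V ℓ m l i k) ^ 2 ≠ 0 :=
    VV_sub_ne' i t i k (by simp [htk])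
  have hc2x : (V ℓ m l i t) ^ 2
      - (cst ℓ m l (qiz ℓ d i (-1))) ^ 2 * (V ℓ m l i k) ^ 2 ≠ 0 := by
    have := VV_sub_ne (l := l) i t i k (by simp [htk]) (qiz ℓ d i (-2)) (qiz_ne d i _)
    rwa [cst_qiz_sq] at this
  have hDf := (eq_div_iff hyx0).2 hD
  simp only [Phi, Psi, map_mul, map_div₀, map_zpow₀]
  rw [sig_V_ne d i k i t hne, sig_cst, sig_P1_self i k, sig_P2_fix i k i le_rfl,
    sig_Rarg i k i t hne, sig_Xpr_fix i k i t le_rfl hne, hDf]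
  field_simp

lemma sig_Phi_cross (i j : Fin ℓ) (k : Fin (m i)) (t : Fin (m j)) (n : ℤ) (hij : i < j)
    (hai : a j i ≤ 0) :
    sig d j t (Phi ℓ m l d a Rp i k n)
        * ((V ℓ m l i k) ^ 2 - cst ℓ m l (qz (-((d j : ℤ) * a j i))) * (V ℓ m l j t) ^ 2)
      = cst ℓ m l (qz (-((d j : ℤ) * a j i))) * Phi ℓ m l d a Rp i k n
        * ((V ℓ m l i k) ^ 2 - cst ℓ m l (qz ((d j : ℤ) * a j i)) * (V ℓ m l j t) ^ 2) := by
  have hne : (Sum.inl ⟨i, k⟩ : Var ℓ m l) ≠ Sum.inl ⟨j, t⟩ := by simp [hij.ne]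
  have hX := sig_Xpr_cross (m := m) (l := l) (d := d) (a := a) i j k t hij hai
  have hden : (V ℓ m l i k) ^ 2
      - cst ℓ m l (qz (-((d j : ℤ) * a j i))) * (V ℓ m l j t) ^ 2 ≠ 0 :=
    VV_sub_ne i k j t (by simp [hij.ne]) _ (qz_ne _)
  have hXf := (eq_div_iff hden).2 hX
  have hD0 : Dpr ℓ m l i k ≠ 0 := Dpr_ne_zero i k
  simp only [Phi, Psi, map_mul, map_div₀, map_zpow₀]
  rw [sig_V_ne d j t i k hne, sig_cst, sig_P1_fix j t i hij.ne, sig_P2_cross i j t hij,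
    sig_Rarg j t i k hne, sig_Dpr_fix j t i k hij.ne, hXf]
  field_simp

end Infra8
section Infra9
variable {ℓ : ℕ} {m l : Fin ℓ → ℕ} {d : Fin ℓ → ℕ} {a : Fin ℓ → Fin ℓ → ℤ}
  {Rp : (i : Fin ℓ) → Polynomial (WField ℓ l)}

lemma zpow_succ2 {G : Type*} [GroupWithZero G] (v : G) (hv : v ≠ 0) (nn : ℤ) :
    v ^ (2 * (nn + 1) - 2) = v ^ (2 * nn - 2) * v ^ (2 : ℕ) := by
  rw [← zpow_natCast v 2, ← zpow_add₀ hv]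
  congr 1
  push_cast
  ring

lemma key_rel (ha : ∀ i, a i i = 2) (ha' : ∀ i j, i ≠ j → a i j ≤ 0)
    (hsym : ∀ i j, (d i : ℤ) * a i j = (d j : ℤ) * a j i)
    (i j : Fin ℓ) (k : Fin (m i)) (t : Fin (m j)) (n n' : ℤ) :
    Phi ℓ m l d a Rp i k (n + 1) * sig d i k (Phi ℓ m l d a Rp j t n')
        - cst ℓ m l (qiz ℓ d i (a i j))
          * (Phi ℓ m l d a Rp i k n * sig d i k (Phi ℓ m l d a Rp j t (n' + 1)))
      = cst ℓ m l (qiz ℓ d i (a i j))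
          * (Phi ℓ m l d a Rp j t n' * sig d j t (Phi ℓ m l d a Rp i k (n + 1)))
        - Phi ℓ m l d a Rp j t (n' + 1) * sig d j t (Phi ℓ m l d a Rp i k n) := by
  rcases lt_trichotomy i j with hij | heq | hji
  · -- case i < j
    have hQc : qiz ℓ d i (a i j) = qz ((d j : ℤ) * a j i) := by
      rw [qiz, qz, hsym i j]
    rw [hQc, Phi_succ Rp i k n, Phi_succ Rp j t n']
    simp only [map_mul, map_pow]
    rw [sig_V_ne_idx d i k j t hij.ne', sig_V_ne_idx d j t i k hij.ne,
      sig_Phi_fix i j k t n' hij]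
    have hA := sig_Phi_cross (Rp := Rp) (d := d) i j k t n hij (ha' j i hij.ne')
    have hden : (V ℓ m l i k) ^ 2
        - cst ℓ m l (qz (-((d j : ℤ) * a j i))) * (V ℓ m l j t) ^ 2 ≠ 0 :=
      VV_sub_ne i k j t (by simp [hij.ne]) _ (qz_ne _)
    have hAf := (eq_div_iff hden).2 hA
    rw [hAf]
    rw [cst_qz_neg] at hden ⊢
    have hQ0 : cst ℓ m l (qz ((d j : ℤ) * a j i)) ≠ 0 := cst_qz_ne _
    have hden2 : V ℓ m l i k ^ 2 * cst ℓ m l (qz ((d j : ℤ) * a j i))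
        - V ℓ m l j t ^ 2 ≠ 0 := by
      have e1 : V ℓ m l i k ^ 2 * cst ℓ m l (qz ((d j : ℤ) * a j i)) - V ℓ m l j t ^ 2
          = cst ℓ m l (qz ((d j : ℤ) * a j i))
            * (V ℓ m l i k ^ 2
              - (cst ℓ m l (qz ((d j : ℤ) * a j i)))⁻¹ * V ℓ m l j t ^ 2) := by
        field_simp
      rw [e1]
      exact mul_ne_zero hQ0 hden
    field_simp [hden2]
  · -- case i = j
    subst heq
    by_cases hkt : k = t
    · subst hkt
      rw [ha i, cst_qiz_two i, sig_Phi_self i k n', sig_Phi_self i k (n' + 1),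
        sig_Phi_self i k n, sig_Phi_self i k (n + 1)]
      simp only [Phi]
      rw [zpow_succ2 _ (V_ne_zero i k) n, zpow_succ2 _ (V_ne_zero i k) n',
        zpow_succ2 _ (cst_qiz_ne i (-1)) n, zpow_succ2 _ (cst_qiz_ne i (-1)) n']
      have hc0 : cst ℓ m l (qiz ℓ d i (-1)) ≠ 0 := cst_qiz_ne i (-1)
      field_simp
      ring
    · have htk : t ≠ k := fun e => hkt e.symm
      rw [ha i, cst_qiz_two i, Phi_succ Rp i k n, Phi_succ Rp i t n']
      simp only [map_mul, map_pow]
      rw [sig_V_ne_k d i k t htk, sig_V_ne_k d i t k hkt]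
      have hA := sig_Phi_diag (Rp := Rp) (a := a) (d := d) i k t n' htk
      have hB := sig_Phi_diag (Rp := Rp) (a := a) (d := d) i t k n hkt
      have hden1 : (V ℓ m l i t) ^ 2
          - (cst ℓ m l (qiz ℓ d i (-1))) ^ 2 * (V ℓ m l i k) ^ 2 ≠ 0 := by
        have := VV_sub_ne (l := l) i t i k (by simp [htk]) (qiz ℓ d i (-2)) (qiz_ne d i _)
        rwa [cst_qiz_sq] at this
      have hden2 : (V ℓ m l i k) ^ 2
          - (cst ℓ m l (qiz ℓ d i (-1))) ^ 2 * (V ℓ m l i t) ^ 2 ≠ 0 := by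
        have := VV_sub_ne (l := l) i k i t (by simp [hkt]) (qiz ℓ d i (-2)) (qiz_ne d i _)
        rwa [cst_qiz_sq] at this
      have hAf := (eq_div_iff hden1).2 hA
      have hBf := (eq_div_iff hden2).2 hB
      rw [hAf, hBf]
      have hc0 : cst ℓ m l (qiz ℓ d i (-1)) ≠ 0 := cst_qiz_ne i (-1)
      field_simp
      rw [div_eq_iff (fun h => hden1 (by linear_combination h))]
      ring
  · -- case j < i
    have hQc : qiz ℓ d i (a i j) = qz ((d i : ℤ) * a i j) := rfl
    rw [hQc, Phi_succ Rp i k n, Phi_succ Rp j t n']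
    simp only [map_mul, map_pow]
    rw [sig_V_ne_idx d j t i k hji.ne', sig_V_ne_idx d i k j t hji.ne,
      sig_Phi_fix j i t k n hji]
    have hB := sig_Phi_cross (Rp := Rp) (d := d) j i t k n' hji (ha' i j hji.ne')
    have hden : (V ℓ m l j t) ^ 2
        - cst ℓ m l (qz (-((d i : ℤ) * a i j))) * (V ℓ m l i k) ^ 2 ≠ 0 :=
      VV_sub_ne j t i k (by simp [hji.ne]) _ (qz_ne _)
    have hBf := (eq_div_iff hden).2 hB
    rw [hBf]
    rw [cst_qz_neg] at hden ⊢
    have hQ0 : cst ℓ m l (qz ((d i : ℤ) * a i j)) ≠ 0 := cst_qz_ne _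
    have hden2 : V ℓ m l j t ^ 2 * cst ℓ m l (qz ((d i : ℤ) * a i j))
        - V ℓ m l i k ^ 2 ≠ 0 := by
      have e1 : V ℓ m l j t ^ 2 * cst ℓ m l (qz ((d i : ℤ) * a i j)) - V ℓ m l i k ^ 2
          = cst ℓ m l (qz ((d i : ℤ) * a i j))
            * (V ℓ m l j t ^ 2
              - (cst ℓ m l (qz ((d i : ℤ) * a i j)))⁻¹ * V ℓ m l i k ^ 2) := by
        field_simp
      rw [e1]
      exact mul_ne_zero hQ0 hden
    field_simp [hden2]
    rw [div_eq_iff (fun h => hden2 (by linear_combination h))]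
    ring

end Infra9
/-- the quantum affine raising–raising relation, mode-wise. -/
theorem qaffine_EE
    (ℓ : ℕ) (hℓ : 1 ≤ ℓ)
    (a : Fin ℓ → Fin ℓ → ℤ) (ha : ∀ i, a i i = 2) (ha' : ∀ i j, i ≠ j → a i j ≤ 0)
    (d : Fin ℓ → ℕ) (hd : ∀ i, 0 < d i)
    (hsym : ∀ i j, (d i : ℤ) * a i j = (d j : ℤ) * a j i)
    (m : Fin ℓ → ℕ) (hm : ∀ i, 0 < m i)
    (l : Fin ℓ → ℕ) (hln : ∀ i, (l i : ℤ) = ∑ j, (m j : ℤ) * a j i)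
    (Rp Rm : (i : Fin ℓ) → Polynomial (WField ℓ l))
    (hR : ∀ i, Rp i * Rm i =
      ∏ t : Fin (l i), (Polynomial.X * Polynomial.C (Wsmall ℓ l i t)⁻¹
        - Polynomial.C (Wsmall ℓ l i t)))
    (i j : Fin ℓ) (n n' : ℤ) :
    Enop ℓ m l d a Rp i (n + 1) ∘ Enop ℓ m l d a Rp j n'
        - cst ℓ m l (qiz ℓ d i (a i j)) • (Enop ℓ m l d a Rp i n ∘ Enop ℓ m l d a Rp j (n' + 1))
      = cst ℓ m l (qiz ℓ d i (a i j)) • (Enop ℓ m l d a Rp j n' ∘ Enop ℓ m l d a Rp i (n + 1))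
        - Enop ℓ m l d a Rp j (n' + 1) ∘ Enop ℓ m l d a Rp i n := by
  funext f
  simp only [Function.comp_apply, Pi.sub_apply, Pi.smul_apply, smul_eq_mul]
  simp only [Enop_apply, map_sum, map_mul, Finset.mul_sum]
  simp only [← Finset.sum_sub_distrib]
  conv_rhs => rw [Finset.sum_comm]
  refine Finset.sum_congr rfl fun k _ => Finset.sum_congr rfl fun t _ => ?_
  rw [sig_comm d j t i k f]
  linear_combination (sig d i k (sig d j t f))
    * key_rel (Rp := Rp) ha ha' hsym i j k t n n'
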